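/- Let v2, v3 : ℝ → ℝ be twice continuously differentiable functions with v2'(1) = 0, v3'(2π/3) = 0, v2''(1) > 0, v3''(2π/3) > 0. Define the energy E(λ, α1, α2) = 2v2(λ) + (1/2)v2(3/2 + λ cos α1) + (1/2)v2(3/2 + λ cos α2) + 2v3(α1) + 2v3(α2) + v3(β(α1,π)) + v3(β(α2,π)) with β(α,γ) = 2 arcsin(sin α sin(γ/2)). Then the Hessian of E at (λ, α1, α2) = (1, 2π/3, 2π/3) is positive definite. -/

import Mathlib

open Real
open Topology

noncomputable def β (α γ : ℝ) : ℝ := 2 * Real.arcsin (Real.sin α * Real.sin (γ / 2))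

noncomputable def Esym (v2 v3 : ℝ → ℝ) (p : ℝ × ℝ × ℝ) : ℝ :=
  2 * v2 p.1 + (1 / 2) * v2 (3 / 2 + p.1 * Real.cos p.2.1)
    + (1 / 2) * v2 (3 / 2 + p.1 * Real.cos p.2.2)
    + 2 * v3 p.2.1 + 2 * v3 p.2.2 + v3 (β p.2.1 π) + v3 (β p.2.2 π)

lemma beta_pi (α : ℝ) (h1 : π/2 < α) (h2 : α < 3*π/2) : β α π = 2*π - 2*α := by
  unfold β
  rw [Real.sin_pi_div_two, mul_one, ← Real.sin_pi_sub,
    Real.arcsin_sin (by linarith) (by linarith)]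
  ring

noncomputable def Gaux (v2 v3 : ℝ → ℝ) (l α : ℝ) : ℝ :=
  1/2 * v2 (3/2 + l * Real.cos α) + 2 * v3 α + v3 (2*π - 2*α)

noncomputable def Faux (v2 v3 : ℝ → ℝ) (p : ℝ × ℝ × ℝ) : ℝ :=
  2 * v2 p.1 + Gaux v2 v3 p.1 p.2.1 + Gaux v2 v3 p.1 p.2.2

lemma hl' (x : ℝ) (t : ℝ) : HasDerivAt (fun s : ℝ => 1 + s*x) x t := by
  simpa using ((hasDerivAt_id t).mul_const x).const_add 1

lemma hA' (y : ℝ) (t : ℝ) : HasDerivAt (fun s : ℝ => 2*π/3 + s*y) y t := by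
  simpa using ((hasDerivAt_id t).mul_const y).const_add (2*π/3)

lemma hd' (y : ℝ) (t : ℝ) : HasDerivAt (fun s : ℝ => 2*π - 2*(2*π/3 + s*y)) (-(2*y)) t := by
  have := ((hA' y t).const_mul 2).const_sub (2*π)
  simpa using this

lemma hc' (x y : ℝ) (t : ℝ) :
    HasDerivAt (fun s : ℝ => 3/2 + (1+s*x) * Real.cos (2*π/3 + s*y))
      (x * Real.cos (2*π/3+t*y) + (1+t*x) * (-Real.sin (2*π/3+t*y) * y)) t :=
  ((hl' x t).mul ((hA' y t).cos)).const_add (3/2)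

lemma Gderiv (v2 v3 : ℝ → ℝ) (hv2 : Differentiable ℝ v2) (hv3 : Differentiable ℝ v3)
    (x y t : ℝ) :
    HasDerivAt (fun s : ℝ => Gaux v2 v3 (1+s*x) (2*π/3+s*y))
      (1/2 * (deriv v2 (3/2+(1+t*x)*Real.cos (2*π/3+t*y)) *
          (x * Real.cos (2*π/3+t*y) + (1+t*x) * (-Real.sin (2*π/3+t*y) * y)))
        + 2 * (deriv v3 (2*π/3+t*y) * y)
        + deriv v3 (2*π - 2*(2*π/3+t*y)) * -(2*y)) t :=
  (((((hv2 _).hasDerivAt.comp t (hc' x y t)).const_mul (1/2)).add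
    (((hv3 _).hasDerivAt.comp t (hA' y t)).const_mul 2)).add
    (((hv3 _).hasDerivAt.comp t (hd' y t))))

lemma psi_deriv (v2 v3 : ℝ → ℝ) (hdv2 : Differentiable ℝ (deriv v2))
    (hdv3 : Differentiable ℝ (deriv v3)) (x y : ℝ) :
    HasDerivAt (fun t : ℝ =>
      1/2 * (deriv v2 (3/2+(1+t*x)*Real.cos (2*π/3+t*y)) *
          (x * Real.cos (2*π/3+t*y) + (1+t*x) * (-Real.sin (2*π/3+t*y) * y)))
        + 2 * (deriv v3 (2*π/3+t*y) * y)
        + deriv v3 (2*π - 2*(2*π/3+t*y)) * -(2*y))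
      (1/2 * ((deriv (deriv v2) (3/2+(1+0*x)*Real.cos (2*π/3+0*y)) *
            (x * Real.cos (2*π/3+0*y) + (1+0*x) * (-Real.sin (2*π/3+0*y) * y))) *
            (x * Real.cos (2*π/3+0*y) + (1+0*x) * (-Real.sin (2*π/3+0*y) * y))
          + deriv v2 (3/2+(1+0*x)*Real.cos (2*π/3+0*y)) *
            (x * (-Real.sin (2*π/3+0*y) * y)
              + (x * (-Real.sin (2*π/3+0*y) * y) + (1+0*x) * (-(Real.cos (2*π/3+0*y) * y) * y))))
        + 2 * ((deriv (deriv v3) (2*π/3+0*y) * y) * y)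
        + (deriv (deriv v3) (2*π - 2*(2*π/3+0*y)) * -(2*y)) * -(2*y)) 0 := by
  have hu : HasDerivAt (fun t : ℝ => deriv v2 (3/2+(1+t*x)*Real.cos (2*π/3+t*y)))
      (deriv (deriv v2) (3/2+(1+0*x)*Real.cos (2*π/3+0*y)) *
        (x * Real.cos (2*π/3+0*y) + (1+0*x) * (-Real.sin (2*π/3+0*y) * y))) 0 :=
    (hdv2 _).hasDerivAt.comp 0 (hc' x y 0)
  have hw : HasDerivAt (fun t : ℝ =>
      x * Real.cos (2*π/3+t*y) + (1+t*x) * (-Real.sin (2*π/3+t*y) * y))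
      (x * (-Real.sin (2*π/3+0*y) * y)
        + (x * (-Real.sin (2*π/3+0*y) * y) + (1+0*x) * (-(Real.cos (2*π/3+0*y) * y) * y))) 0 :=
    (((hA' y 0).cos).const_mul x).add ((hl' x 0).mul (((hA' y 0).sin.neg).mul_const y))
  exact (((hu.mul hw).const_mul (1/2)).add
      ((((hdv3 _).hasDerivAt.comp 0 (hA' y 0)).mul_const y).const_mul 2)).add
    (((hdv3 _).hasDerivAt.comp 0 (hd' y 0)).mul_const (-(2*y)))


theorem hessian_posDef (v2 v3 : ℝ → ℝ)
    (hv2 : ContDiff ℝ 2 v2) (hv3 : ContDiff ℝ 2 v3)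
    (hv2' : deriv v2 1 = 0) (hv3' : deriv v3 (2 * π / 3) = 0)
    (hv2'' : 0 < deriv (deriv v2) 1) (hv3'' : 0 < deriv (deriv v3) (2 * π / 3)) :
    ∀ v : ℝ × ℝ × ℝ, v ≠ 0 →
      0 < iteratedFDeriv ℝ 2 (Esym v2 v3) (1, 2 * π / 3, 2 * π / 3) ![v, v] := by

  have hpi := Real.pi_pos
  -- basic differentiability facts
  have hv2d : Differentiable ℝ v2 := hv2.differentiable (by norm_num)
  have hv3d : Differentiable ℝ v3 := hv3.differentiable (by norm_num)
  have hdv2c : ContDiff ℝ 1 (deriv v2) :=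
    (contDiff_succ_iff_deriv.mp (show ContDiff ℝ (1+1) v2 by norm_num; exact hv2)).2.2
  have hdv3c : ContDiff ℝ 1 (deriv v3) :=
    (contDiff_succ_iff_deriv.mp (show ContDiff ℝ (1+1) v3 by norm_num; exact hv3)).2.2
  have hdv2 : Differentiable ℝ (deriv v2) := hdv2c.differentiable one_ne_zero
  have hdv3 : Differentiable ℝ (deriv v3) := hdv3c.differentiable one_ne_zero
  have hF2 : ContDiff ℝ 2 (Faux v2 v3) := by
    have hcos : ContDiff ℝ 2 Real.cos := Real.contDiff_cos
    unfold Faux Gaux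
    fun_prop
  -- local equality of Esym and Faux
  have hEq : Esym v2 v3 =ᶠ[𝓝 ((1 : ℝ), 2 * π / 3, 2 * π / 3)] Faux v2 v3 := by
    have hS : IsOpen (((fun p : ℝ × ℝ × ℝ => p.2.1) ⁻¹' Set.Ioo (π/2) (3*π/2)) ∩
        ((fun p : ℝ × ℝ × ℝ => p.2.2) ⁻¹' Set.Ioo (π/2) (3*π/2))) :=
      (isOpen_Ioo.preimage (continuous_fst.comp continuous_snd)).inter
        (isOpen_Ioo.preimage (continuous_snd.comp continuous_snd))
    have hmem : ((1 : ℝ), 2 * π / 3, 2 * π / 3) ∈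
        (((fun p : ℝ × ℝ × ℝ => p.2.1) ⁻¹' Set.Ioo (π/2) (3*π/2)) ∩
        ((fun p : ℝ × ℝ × ℝ => p.2.2) ⁻¹' Set.Ioo (π/2) (3*π/2))) :=
      Set.mem_inter (Set.mem_preimage.mpr ⟨by linarith, by linarith⟩)
        (Set.mem_preimage.mpr ⟨by linarith, by linarith⟩)
    refine Filter.eventuallyEq_of_mem (hS.mem_nhds hmem) (fun p hp => ?_)
    obtain ⟨⟨h1, h2⟩, ⟨h3, h4⟩⟩ := hp
    simp only [Esym, Faux, Gaux, beta_pi _ h1 h2, beta_pi _ h3 h4]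
    ring
  intro v hv
  obtain ⟨x, a, b⟩ := v
  rw [iteratedFDeriv_two_apply]
  simp only [Matrix.cons_val_zero, Matrix.cons_val_one, Matrix.head_cons]
  rw [hEq.fderiv.fderiv_eq]
  -- the curve q
  have hq : ∀ t : ℝ, HasDerivAt
      (fun s : ℝ => ((1+s*x, 2*π/3+s*a, 2*π/3+s*b) : ℝ × ℝ × ℝ)) ((x, a, b)) t :=
    fun t => HasDerivAt.prodMk (hl' x t) (HasDerivAt.prodMk (hA' a t) (hA' b t))
  have hq0 : ((1+(0:ℝ)*x, 2*π/3+(0:ℝ)*a, 2*π/3+(0:ℝ)*b) : ℝ × ℝ × ℝ)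
      = ((1 : ℝ), 2 * π / 3, 2 * π / 3) := by norm_num
  -- first derivative along the curve
  have hFder : ∀ t : ℝ, fderiv ℝ (Faux v2 v3) (1+t*x, 2*π/3+t*a, 2*π/3+t*b) (x, a, b)
      = 2 * (deriv v2 (1+t*x) * x)
        + (1/2 * (deriv v2 (3/2+(1+t*x)*Real.cos (2*π/3+t*a)) *
            (x * Real.cos (2*π/3+t*a) + (1+t*x) * (-Real.sin (2*π/3+t*a) * a)))
          + 2 * (deriv v3 (2*π/3+t*a) * a)
          + deriv v3 (2*π - 2*(2*π/3+t*a)) * -(2*a))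
        + (1/2 * (deriv v2 (3/2+(1+t*x)*Real.cos (2*π/3+t*b)) *
            (x * Real.cos (2*π/3+t*b) + (1+t*x) * (-Real.sin (2*π/3+t*b) * b)))
          + 2 * (deriv v3 (2*π/3+t*b) * b)
          + deriv v3 (2*π - 2*(2*π/3+t*b)) * -(2*b)) := by
    intro t
    have h1 : HasDerivAt (fun s : ℝ => Faux v2 v3 (1+s*x, 2*π/3+s*a, 2*π/3+s*b))
        (fderiv ℝ (Faux v2 v3) (1+t*x, 2*π/3+t*a, 2*π/3+t*b) (x, a, b)) t :=
      ((hF2.differentiable (by norm_num) _).hasFDerivAt).comp_hasDerivAt t (hq t)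
    have h2 : HasDerivAt (fun s : ℝ => Faux v2 v3 (1+s*x, 2*π/3+s*a, 2*π/3+s*b)) _ t :=
      (((hv2d _).hasDerivAt.comp t (hl' x t)).const_mul 2).add
        (Gderiv v2 v3 hv2d hv3d x a t) |>.add (Gderiv v2 v3 hv2d hv3d x b t)
    exact h1.unique h2
  -- second derivative along the curve
  have hev : HasFDerivAt (fderiv ℝ (Faux v2 v3))
      (fderiv ℝ (fderiv ℝ (Faux v2 v3)) ((1 : ℝ), 2 * π / 3, 2 * π / 3))
      ((1 : ℝ), 2 * π / 3, 2 * π / 3) :=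
    (((hF2.fderiv_right (m := 1) (le_refl 2)).differentiable one_ne_zero) _).hasFDerivAt
  have hchain : HasDerivAt
      (fun t : ℝ => fderiv ℝ (Faux v2 v3) (1+t*x, 2*π/3+t*a, 2*π/3+t*b) ((x, a, b)))
      (fderiv ℝ (fderiv ℝ (Faux v2 v3)) ((1 : ℝ), 2 * π / 3, 2 * π / 3) ((x, a, b)) ((x, a, b)))
      0 := by
    have hcl : HasDerivAt
        (fun t : ℝ => fderiv ℝ (Faux v2 v3) (1+t*x, 2*π/3+t*a, 2*π/3+t*b))
        (fderiv ℝ (fderiv ℝ (Faux v2 v3)) ((1 : ℝ), 2 * π / 3, 2 * π / 3) ((x, a, b))) 0 := by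
      refine HasFDerivAt.comp_hasDerivAt 0 ?_ (hq 0)
      rw [hq0]; exact hev
    simpa using hcl.clm_apply (hasDerivAt_const 0 ((x, a, b) : ℝ × ℝ × ℝ))
  have hphi : HasDerivAt
      (fun t : ℝ => fderiv ℝ (Faux v2 v3) (1+t*x, 2*π/3+t*a, 2*π/3+t*b) ((x, a, b)))
      ((2 * ((deriv (deriv v2) (1+0*x) * x) * x))
        + (1/2 * ((deriv (deriv v2) (3/2+(1+0*x)*Real.cos (2*π/3+0*a)) *
            (x * Real.cos (2*π/3+0*a) + (1+0*x) * (-Real.sin (2*π/3+0*a) * a))) *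
            (x * Real.cos (2*π/3+0*a) + (1+0*x) * (-Real.sin (2*π/3+0*a) * a))
          + deriv v2 (3/2+(1+0*x)*Real.cos (2*π/3+0*a)) *
            (x * (-Real.sin (2*π/3+0*a) * a)
              + (x * (-Real.sin (2*π/3+0*a) * a) + (1+0*x) * (-(Real.cos (2*π/3+0*a) * a) * a))))
        + 2 * ((deriv (deriv v3) (2*π/3+0*a) * a) * a)
        + (deriv (deriv v3) (2*π - 2*(2*π/3+0*a)) * -(2*a)) * -(2*a))
        + (1/2 * ((deriv (deriv v2) (3/2+(1+0*x)*Real.cos (2*π/3+0*b)) *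
            (x * Real.cos (2*π/3+0*b) + (1+0*x) * (-Real.sin (2*π/3+0*b) * b))) *
            (x * Real.cos (2*π/3+0*b) + (1+0*x) * (-Real.sin (2*π/3+0*b) * b))
          + deriv v2 (3/2+(1+0*x)*Real.cos (2*π/3+0*b)) *
            (x * (-Real.sin (2*π/3+0*b) * b)
              + (x * (-Real.sin (2*π/3+0*b) * b) + (1+0*x) * (-(Real.cos (2*π/3+0*b) * b) * b))))
        + 2 * ((deriv (deriv v3) (2*π/3+0*b) * b) * b)
        + (deriv (deriv v3) (2*π - 2*(2*π/3+0*b)) * -(2*b)) * -(2*b))) 0 := by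
    have hx : HasDerivAt (fun t : ℝ => 2 * (deriv v2 (1+t*x) * x))
        (2 * ((deriv (deriv v2) (1+0*x) * x) * x)) 0 :=
      (((hdv2 _).hasDerivAt.comp 0 (hl' x 0)).mul_const x).const_mul 2
    have h := (hx.add (psi_deriv v2 v3 hdv2 hdv3 x a)).add (psi_deriv v2 v3 hdv2 hdv3 x b)
    have hfe : (fun t : ℝ => fderiv ℝ (Faux v2 v3) (1+t*x, 2*π/3+t*a, 2*π/3+t*b) ((x, a, b)))
        = _ := funext hFder
    rw [hfe]
    exact h
  have hval := hchain.unique hphi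
  rw [hval]
  -- now a purely numeric inequality
  have hcos23 : Real.cos (2*π/3) = -(1/2) := by
    rw [show 2*π/3 = π - π/3 by ring, Real.cos_pi_sub, Real.cos_pi_div_three]
  have hsin23 : Real.sin (2*π/3) = Real.sqrt 3 / 2 := by
    rw [show 2*π/3 = π - π/3 by ring, Real.sin_pi_sub, Real.sin_pi_div_three]
  have e1 : (2*π - 2*(2*π/3)) = 2*π/3 := by ring
  have e2 : (2*π/3) = 2*π/3 := rfl
  simp only [zero_mul, add_zero, mul_zero, one_mul]
  rw [hcos23, hsin23, e1]
  rw [show ((3:ℝ)/2 + -(1/2)) = 1 by norm_num, hv2']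
  clear hval hphi hchain hFder hev hEq hF2 hq hq0 hv2 hv3 hv2d hv3d hdv2c hdv3c hdv2 hdv3 hv3' e1 e2 hcos23 hsin23
  set A := deriv (deriv v2) 1 with hA
  set B := deriv (deriv v3) (2*π/3) with hB
  set s3 := Real.sqrt 3 with hs3
  have hs : Real.sqrt 3 * Real.sqrt 3 = 3 := Real.mul_self_sqrt (by norm_num)
  by_cases hab : a = 0 ∧ b = 0
  · obtain ⟨rfl, rfl⟩ := hab
    have hx : x ≠ 0 := by simpa [Prod.ext_iff] using hv
    nlinarith [mul_pos hv2'' (mul_self_pos.mpr hx), hs]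
  · have hab2 : 0 < a*a + b*b := by
      rcases not_and_or.mp hab with h | h
      · nlinarith [mul_self_pos.mpr h, mul_self_nonneg b]
      · nlinarith [mul_self_pos.mpr h, mul_self_nonneg a]
    nlinarith [mul_pos hv3'' hab2,
      mul_nonneg hv2''.le (mul_self_nonneg (x * -(1/2) + -(Real.sqrt 3/2) * a)),
      mul_nonneg hv2''.le (mul_self_nonneg (x * -(1/2) + -(Real.sqrt 3/2) * b)),
      mul_nonneg hv2''.le (mul_self_nonneg x), hs]
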